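/- arXiv:1803.10904 — 6 statements merged into one kernel-verified Lean document; each statement's English description precedes it below -/
import Mathlib

section
/- Let A be a bounded linear operator on a complex Hilbert space H, let σ₀ ∈ ℂ be such that σ₀I − A is invertible, and let τ ∈ ℂ with |τ| = 1. Assume that the numerical range of A lies in the half-plane Π₀ = {z ∈ ℂ : Im(τ (conj(σ₀) − conj(z))) ≥ 0}, i.e. Im(τ(conj(σ₀) − conj(⟨Au, u⟩))) ≥ 0 for every unit vector u ∈ H. Then the self-adjoint operator μ(σ₀, τ; A) := (1/(2πi)) ( τ (σ₀I − A)⁻¹ − conj(τ) (conj(σ₀)I − A*)⁻¹ ) is positive semidefinite: Re⟨μ(σ₀, τ; A) v, v⟩ ≥ 0 for every v ∈ H. -/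
variable {H : Type*} [NormedAddCommGroup H] [InnerProductSpace ℂ H] [CompleteSpace H]

/-- The double layer potential kernel
`μ(σ, τ; A) = (1/(2πi)) (τ (σI − A)⁻¹ − conj(τ) (conj(σ)I − A*)⁻¹)`,
where `τ` plays the role of the unit tangent. -/
noncomputable def dlpKernel (A : H →L[ℂ] H) (σ τ : ℂ) : H →L[ℂ] H :=
  (2 * (Real.pi : ℂ) * Complex.I)⁻¹ •
    (τ • Ring.inverse (σ • (1 : H →L[ℂ] H) - A) -
      (starRingEnd ℂ τ) • Ring.inverse
        ((starRingEnd ℂ σ) • (1 : H →L[ℂ] H) - ContinuousLinearMap.adjoint A))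

/-- **Lemma 4, first part.** If the numerical range of `A` lies in the half
plane `Π₀ = {z : Im(τ(conj σ₀ − conj z)) ≥ 0}`, `|τ| = 1` and `σ₀ I − A` is invertible, then
the self-adjoint operator `μ(σ₀, τ; A)` is positive semidefinite. -/
theorem dlpKernel_nonneg_of_numericalRange_subset_halfplane
    (A : H →L[ℂ] H) (σ₀ τ : ℂ) (hτ : ‖τ‖ = 1)
    (hinv : IsUnit (σ₀ • (1 : H →L[ℂ] H) - A))
    (hW : ∀ u : H, ‖u‖ = 1 →
      0 ≤ (τ * (starRingEnd ℂ σ₀ - starRingEnd ℂ (inner ℂ u (A u) : ℂ))).im) :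
    ∀ v : H, 0 ≤ (inner ℂ v (dlpKernel A σ₀ τ v) : ℂ).re := by
  intro v
  set B := σ₀ • (1 : H →L[ℂ] H) - A with hB
  set R := Ring.inverse B with hRdef
  set u := R v with hu
  have hBu : B u = v := by
    have h1 : B * R = 1 := Ring.mul_inverse_cancel B hinv
    calc B u = (B * R) v := rfl
    _ = v := by rw [h1]; rfl
  have hstar : (starRingEnd ℂ σ₀) • (1 : H →L[ℂ] H) - ContinuousLinearMap.adjoint A
      = star B := by
    simp [hB, star_sub, star_smul, ContinuousLinearMap.star_eq_adjoint, Complex.star_def]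
  set z : ℂ := inner ℂ u (B u) with hz
  set w : ℂ := τ * (starRingEnd ℂ z) with hw
  have hinner : (inner ℂ v (dlpKernel A σ₀ τ v) : ℂ)
      = (2 * (Real.pi : ℂ) * Complex.I)⁻¹ * (w - starRingEnd ℂ w) := by
    have hSv : ((Ring.inverse ((starRingEnd ℂ σ₀) • (1 : H →L[ℂ] H)
        - ContinuousLinearMap.adjoint A)) : H →L[ℂ] H) v = ContinuousLinearMap.adjoint R v := by
      rw [hstar, Ring.inverse_star, ContinuousLinearMap.star_eq_adjoint]
    have h1 : (inner ℂ v (dlpKernel A σ₀ τ v) : ℂ)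
        = (2 * (Real.pi : ℂ) * Complex.I)⁻¹ *
          (τ * inner ℂ v u - (starRingEnd ℂ τ) * inner ℂ v (ContinuousLinearMap.adjoint R v)) := by
      simp [dlpKernel, hSv, inner_smul_right, inner_sub_right, mul_sub, ← hRdef, ← hu]
      ring
    rw [h1, ContinuousLinearMap.adjoint_inner_right]
    have e1 : (inner ℂ v u : ℂ) = starRingEnd ℂ z := by
      rw [hz, ← inner_conj_symm, ← hBu]
    have e2 : (inner ℂ (R v) v : ℂ) = z := by
      rw [← hu]
      conv_lhs => rw [← hBu]
    rw [e1, e2]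
    congr 1
    rw [hw]
    simp [map_mul, Complex.conj_conj]
  have him : 0 ≤ w.im := by
    rcases eq_or_ne u 0 with h0 | h0
    · simp [hw, hz, h0]
    · set n : ℝ := ‖u‖ with hn
      have hn0 : n ≠ 0 := norm_ne_zero_iff.mpr h0
      have hn0' : (n : ℂ) ≠ 0 := by exact_mod_cast hn0
      set u' : H := (n⁻¹ : ℂ) • u with hu'
      have hnu' : ‖u'‖ = 1 := by
        rw [hu', norm_smul]
        simp [hn0, abs_of_nonneg (norm_nonneg u)]
        rw [hn, abs_of_nonneg (norm_nonneg u)]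
        exact inv_mul_cancel₀ (norm_ne_zero_iff.mpr h0)
      have hwA : inner ℂ u (A u) = ((n : ℂ)^2) * inner ℂ u' (A u') := by
        rw [hu']
        simp [inner_smul_left, inner_smul_right, Complex.conj_ofReal]
        field_simp
      have hiuu : (inner ℂ u u : ℂ) = (n : ℂ)^2 := by
        simp [inner_self_eq_norm_sq_to_K, hn]
      have hzz : z = ((n : ℂ)^2) * (σ₀ - inner ℂ u' (A u')) := by
        rw [hz]
        have hBapp : B u = σ₀ • u - A u := by simp [hB, ContinuousLinearMap.sub_apply]
        rw [hBapp, inner_sub_right, inner_smul_right, hwA, hiuu]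
        ring
      have hwf : w = ((n^2 : ℝ) : ℂ)
          * (τ * (starRingEnd ℂ σ₀ - starRingEnd ℂ (inner ℂ u' (A u') : ℂ))) := by
        rw [hw, hzz, map_mul, map_sub]
        push_cast
        simp [Complex.conj_ofReal]
        ring
      rw [hwf, Complex.im_ofReal_mul]
      exact mul_nonneg (sq_nonneg n) (hW u' hnu')
  rw [hinner, Complex.sub_conj]
  have hπ : (0 : ℝ) < Real.pi := Real.pi_pos
  have key : ((2 * (Real.pi : ℂ) * Complex.I)⁻¹ * (((2 * w.im : ℝ) : ℂ) * Complex.I))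
      = ((w.im / Real.pi : ℝ) : ℂ) := by
    have hI : (Complex.I : ℂ) ≠ 0 := Complex.I_ne_zero
    have hπ' : (Real.pi : ℂ) ≠ 0 := by exact_mod_cast hπ.ne'
    field_simp
    push_cast
    field_simp
  rw [key]
  simp only [Complex.ofReal_re]
  exact div_nonneg him hπ.le
end

section
/- Let A be a bounded linear operator on a complex Hilbert space H, let σ₀ ∈ ℂ be such that σ₀I − A is invertible, and let τ ∈ ℂ with |τ| = 1. Assume Im(τ(conj(σ₀) − conj(⟨Au, u⟩))) ≥ 0 for every unit vector u ∈ H, and assume moreover that σ₀ belongs to the numerical range: σ₀ = ⟨Au₀, u₀⟩ for some unit vector u₀ ∈ H. Then the smallest spectral value of the self-adjoint operator μ(σ₀, τ; A) := (1/(2πi)) ( τ (σ₀I − A)⁻¹ − conj(τ) (conj(σ₀)I − A*)⁻¹ ) is zero: Re⟨μ(σ₀, τ; A) v, v⟩ ≥ 0 for every v ∈ H, and there exists a nonzero vector v₀ ∈ H (namely v₀ = (σ₀I − A)u₀) with ⟨μ(σ₀, τ; A) v₀, v₀⟩ = 0. -/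
variable {H : Type*} [NormedAddCommGroup H] [InnerProductSpace ℂ H] [CompleteSpace H]

/-- **Lemma 4, second part.** If the numerical range of `A` lies in the half
plane `Π₀ = {z : Im(τ(conj σ₀ − conj z)) ≥ 0}`, `|τ| = 1`, `σ₀ I − A` is invertible and
moreover `σ₀ = ⟨A u₀, u₀⟩` belongs to the numerical range, then `μ(σ₀, τ; A) ≥ 0` and its
smallest spectral value is `0`: the quadratic form vanishes at the nonzero vector
`v₀ = (σ₀ I − A) u₀`. -/
theorem dlpKernel_min_eq_zero_of_mem_numericalRange
    (A : H →L[ℂ] H) (σ₀ τ : ℂ) (hτ : ‖τ‖ = 1)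
    (hinv : IsUnit (σ₀ • (1 : H →L[ℂ] H) - A))
    (hW : ∀ u : H, ‖u‖ = 1 →
      0 ≤ (τ * (starRingEnd ℂ σ₀ - starRingEnd ℂ (inner ℂ u (A u) : ℂ))).im)
    (u₀ : H) (hu₀ : ‖u₀‖ = 1) (hσ₀ : σ₀ = (inner ℂ u₀ (A u₀) : ℂ)) :
    (∀ v : H, 0 ≤ (inner ℂ v (dlpKernel A σ₀ τ v) : ℂ).re) ∧
      ∃ v₀ : H, v₀ ≠ 0 ∧ (inner ℂ v₀ (dlpKernel A σ₀ τ v₀) : ℂ) = 0 := by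
  set B : H →L[ℂ] H := σ₀ • (1 : H →L[ℂ] H) - A with hBdef
  set C : H →L[ℂ] H := Ring.inverse B with hCdef
  have hstarB : (starRingEnd ℂ σ₀) • (1 : H →L[ℂ] H) - ContinuousLinearMap.adjoint A
      = star B := by
    simp [hBdef, star_sub, star_smul, ContinuousLinearMap.star_eq_adjoint]
  have hCB : ∀ u : H, C (B u) = u := by
    intro u
    have : (C * B) u = (1 : H →L[ℂ] H) u := by rw [Ring.inverse_mul_cancel B hinv]
    simpa [ContinuousLinearMap.mul_apply] using this
  have hBC : ∀ v : H, B (C v) = v := by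
    intro v
    have : (B * C) v = (1 : H →L[ℂ] H) v := by rw [Ring.mul_inverse_cancel B hinv]
    simpa [ContinuousLinearMap.mul_apply] using this
  -- key formula
  have key : ∀ v : H, (inner ℂ v (dlpKernel A σ₀ τ v) : ℂ)
      = (((τ * (inner ℂ v (C v) : ℂ)).im / Real.pi : ℝ) : ℂ) := by
    intro v
    have hadj : (inner ℂ v ((star C) v) : ℂ) = starRingEnd ℂ (inner ℂ v (C v) : ℂ) := by
      rw [ContinuousLinearMap.star_eq_adjoint, ContinuousLinearMap.adjoint_inner_right,
        ← inner_conj_symm]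
    have : (inner ℂ v (dlpKernel A σ₀ τ v) : ℂ)
        = (2 * (Real.pi : ℂ) * Complex.I)⁻¹ *
          (τ * (inner ℂ v (C v) : ℂ) - starRingEnd ℂ τ * starRingEnd ℂ (inner ℂ v (C v) : ℂ)) := by
      rw [dlpKernel, hstarB, Ring.inverse_star, ← hCdef]
      simp [ContinuousLinearMap.smul_apply, ContinuousLinearMap.sub_apply,
        inner_smul_right, inner_sub_right, hadj]
    rw [this]
    set w : ℂ := τ * (inner ℂ v (C v) : ℂ) with hw
    have h2 : starRingEnd ℂ τ * starRingEnd ℂ (inner ℂ v (C v) : ℂ) = starRingEnd ℂ w := by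
      rw [hw, map_mul]
    rw [h2, Complex.sub_conj]
    have hπ : (Real.pi : ℂ) ≠ 0 := by exact_mod_cast Real.pi_ne_zero
    field_simp [Complex.I_ne_zero, hπ]
    push_cast
    field_simp
  -- sign of Im (τ * ⟨v, C v⟩)
  have him : ∀ v : H, 0 ≤ (τ * (inner ℂ v (C v) : ℂ)).im := by
    intro v
    set u : H := C v with hu
    have hv : v = B u := (hBC v).symm
    have hz : (inner ℂ v (C v) : ℂ) = starRingEnd ℂ (inner ℂ u (B u) : ℂ) := by
      rw [hv, hCB, ← inner_conj_symm]
    have hBu : (inner ℂ u (B u) : ℂ) = σ₀ * (‖u‖ : ℂ)^2 - (inner ℂ u (A u) : ℂ) := by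
      simp [hBdef, ContinuousLinearMap.sub_apply, ContinuousLinearMap.smul_apply,
        inner_sub_right, inner_smul_right, inner_self_eq_norm_sq_to_K]
    by_cases h0 : u = 0
    · simp [hz, hBu, h0]
    · have hnu : ‖u‖ ≠ 0 := norm_ne_zero_iff.mpr h0
      set w : H := (‖u‖ : ℝ)⁻¹ • u with hwdef
      have hnw : ‖w‖ = 1 := by
        rw [hwdef, norm_smul]
        simp [hnu, abs_of_nonneg (inv_nonneg.mpr (norm_nonneg u))]
      have hnuc : ((‖u‖ : ℝ) : ℂ) ≠ 0 := by exact_mod_cast hnu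
      have hiw0 : (inner ℂ w (A w) : ℂ)
          = ((‖u‖ : ℝ)⁻¹ : ℂ) * (((‖u‖ : ℝ)⁻¹ : ℂ) * (inner ℂ u (A u) : ℂ)) := by
        rw [hwdef, ← Complex.coe_smul, map_smul, inner_smul_left, inner_smul_right,
          Complex.conj_ofReal]
        push_cast
        ring
      have hiw : (inner ℂ u (A u) : ℂ) = (‖u‖ : ℂ)^2 * (inner ℂ w (A w) : ℂ) := by
        rw [hiw0]
        field_simp
      have := hW w hnw
      have hcalc : τ * (inner ℂ v (C v) : ℂ)
          = ((‖u‖^2 : ℝ) : ℂ) * (τ * (starRingEnd ℂ σ₀ - starRingEnd ℂ (inner ℂ w (A w) : ℂ))) := by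
        rw [hz, hBu, hiw]
        push_cast
        rw [map_sub, map_mul, map_mul]
        simp [Complex.conj_ofReal]
        ring
      rw [hcalc, Complex.mul_im]
      simp only [Complex.ofReal_re, Complex.ofReal_im, zero_mul, add_zero]
      exact mul_nonneg (by positivity) this
  constructor
  · intro v
    rw [key v, Complex.ofReal_re]
    have := him v
    positivity
  · refine ⟨B u₀, ?_, ?_⟩
    · intro h
      have : u₀ = 0 := by rw [← hCB u₀, h, map_zero]
      rw [this] at hu₀; simp at hu₀
    · have hz : (inner ℂ (B u₀) (C (B u₀)) : ℂ) = 0 := by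
        rw [hCB, ← inner_conj_symm]
        have : (inner ℂ u₀ (B u₀) : ℂ) = 0 := by
          simp [hBdef, ContinuousLinearMap.sub_apply, ContinuousLinearMap.smul_apply,
            inner_sub_right, inner_smul_right, inner_self_eq_norm_sq_to_K, hu₀, ← hσ₀]
        rw [this, map_zero]
      rw [key, hz]
      simp
end

section
/- Let A be a bounded linear operator on a complex Hilbert space H, let ω ∈ ℂ, R > 0, θ ∈ ℝ, and set σ₀ = ω + R e^{iθ} and τ = i e^{iθ}. Assume ‖A − ωI‖ ≤ R and that σ₀I − A is invertible. Then for every v ∈ H, Re⟨μ(σ₀, τ; A) v, v⟩ ≥ ‖v‖² / (2πR); in other words, λ_min(μ(σ₀, τ; A)) ≥ 1/(2πR). -/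
variable {H : Type*} [NormedAddCommGroup H] [InnerProductSpace ℂ H] [CompleteSpace H]

/-- **Lemma 5.** If `‖A − ωI‖ ≤ R`, `σ₀ = ω + R e^{iθ}` is on the circle of
center `ω` and radius `R`, `τ = i e^{iθ}` is the counterclockwise unit tangent there, and
`σ₀ I − A` is invertible, then `λ_min(μ(σ₀, τ; A)) ≥ 1/(2πR)`. -/
theorem dlpKernel_lambda_min_ge_of_norm_le
    (A : H →L[ℂ] H) (ω : ℂ) (R : ℝ) (hR : 0 < R) (θ : ℝ)
    (σ₀ τ : ℂ) (hσ₀ : σ₀ = ω + R * Complex.exp (θ * Complex.I))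
    (hτ : τ = Complex.I * Complex.exp (θ * Complex.I))
    (hA : ‖A - ω • (1 : H →L[ℂ] H)‖ ≤ R)
    (hinv : IsUnit (σ₀ • (1 : H →L[ℂ] H) - A)) :
    ∀ v : H, ‖v‖ ^ 2 / (2 * Real.pi * R) ≤ (inner ℂ v (dlpKernel A σ₀ τ v) : ℂ).re := by
  intro v
  have hπ : (0 : ℝ) < Real.pi := Real.pi_pos
  set B : H →L[ℂ] H := σ₀ • (1 : H →L[ℂ] H) - A with hB
  set C : H →L[ℂ] H := A - ω • (1 : H →L[ℂ] H) with hC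
  -- the second resolvent is the star of the first
  have hstarB : (starRingEnd ℂ σ₀) • (1 : H →L[ℂ] H) - ContinuousLinearMap.adjoint A
      = star B := by
    simp [hB, star_sub, star_smul, ContinuousLinearMap.star_eq_adjoint, Complex.star_def]
  set w : H := Ring.inverse B v with hw
  have hvw : B w = v := by
    have : (B * Ring.inverse B) v = v := by
      rw [Ring.mul_inverse_cancel B hinv]; simp
    simpa [ContinuousLinearMap.mul_apply] using this
  -- inner product with the star-resolvent
  set z : ℂ := inner ℂ v w with hz
  have hstar_inner : (inner ℂ v (Ring.inverse ((starRingEnd ℂ σ₀) • (1 : H →L[ℂ] H)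
      - ContinuousLinearMap.adjoint A) v) : ℂ) = starRingEnd ℂ z := by
    rw [hstarB, Ring.inverse_star, ContinuousLinearMap.star_eq_adjoint,
      ContinuousLinearMap.adjoint_inner_right]
    rw [hz, ← hw, ← inner_conj_symm]
  -- the inner product of the kernel
  have hker : (inner ℂ v (dlpKernel A σ₀ τ v) : ℂ)
      = (2 * (Real.pi : ℂ) * Complex.I)⁻¹ * (τ * z - starRingEnd ℂ (τ * z)) := by
    rw [dlpKernel]
    simp only [ContinuousLinearMap.smul_apply, ContinuousLinearMap.sub_apply,
      inner_smul_right, inner_sub_right]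
    rw [hstar_inner, ← hB, ← hw, ← hz, map_mul]
  have hre : (inner ℂ v (dlpKernel A σ₀ τ v) : ℂ).re = (τ * z).im / Real.pi := by
    rw [hker]
    have h2 : τ * z - starRingEnd ℂ (τ * z) = (2 * (τ * z).im : ℝ) * Complex.I := by
      simpa using Complex.sub_conj (τ * z)
    rw [h2]
    have : (2 * (Real.pi : ℂ) * Complex.I)⁻¹ * ((2 * (τ * z).im : ℝ) * Complex.I)
        = (((τ * z).im / Real.pi : ℝ) : ℂ) := by
      have hπ' : (Real.pi : ℂ) ≠ 0 := by exact_mod_cast hπ.ne'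
      push_cast
      field_simp
    rw [this, Complex.ofReal_re]
  rw [hre]
  -- scalar computations
  set e : ℂ := Complex.exp (θ * Complex.I) with he
  have habs : ‖e‖ = 1 := Complex.norm_exp_ofReal_mul_I θ
  set s : ℂ := inner ℂ w (C w) with hs
  -- z = ⟪B w, w⟫
  have hzBw : z = starRingEnd ℂ ((R : ℂ) * e * (‖w‖ ^ 2 : ℝ) - s) := by
    rw [hz, ← hvw, ← inner_conj_symm]
    congr 1
    have : (inner ℂ w (B w) : ℂ) = σ₀ * (‖w‖ ^ 2 : ℝ) - inner ℂ w (A w) := by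
      simp [hB, ContinuousLinearMap.sub_apply, ContinuousLinearMap.smul_apply,
        inner_sub_right, inner_smul_right, inner_self_eq_norm_sq_to_K]
    rw [this]
    have hAw : (inner ℂ w (A w) : ℂ) = s + ω * (‖w‖ ^ 2 : ℝ) := by
      rw [hs, hC]
      simp [ContinuousLinearMap.sub_apply, ContinuousLinearMap.smul_apply,
        inner_sub_right, inner_smul_right, inner_self_eq_norm_sq_to_K]
    rw [hAw, hσ₀]
    ring
  set t : ℝ := (e * starRingEnd ℂ s).re with ht
  have him : (τ * z).im = R * ‖w‖ ^ 2 - t := by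
    rw [hτ, hzBw]
    have : Complex.I * e * starRingEnd ℂ ((R : ℂ) * e * (‖w‖ ^ 2 : ℝ) - s)
        = Complex.I * ((R : ℂ) * (‖w‖ ^ 2 : ℝ) * (e * starRingEnd ℂ e)
            - e * starRingEnd ℂ s) := by
      simp only [map_sub, map_mul, Complex.conj_ofReal]
      ring
    rw [this]
    have hee : e * starRingEnd ℂ e = 1 := by
      rw [Complex.mul_conj]
      norm_cast
      simp [Complex.normSq_eq_norm_sq, habs]
    rw [hee]
    simp [Complex.mul_im, Complex.sub_re, Complex.sub_im, ht,
      ← Complex.ofReal_pow, Complex.ofReal_re, Complex.ofReal_im]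
  -- ‖v‖² = R²‖w‖² + ‖Cw‖² − 2Rt
  have hBw' : B w = ((R : ℂ) * e) • w - C w := by
    rw [hB, hC]
    simp only [ContinuousLinearMap.sub_apply, ContinuousLinearMap.smul_apply,
      ContinuousLinearMap.one_apply, hσ₀, ← he]
    rw [add_smul]
    abel
  have hnv : ‖v‖ ^ 2 = R ^ 2 * ‖w‖ ^ 2 + ‖C w‖ ^ 2 - 2 * (R * t) := by
    rw [← hvw, hBw']
    rw [@norm_sub_sq ℂ]
    have h1 : ‖((R : ℂ) * e) • w‖ ^ 2 = R ^ 2 * ‖w‖ ^ 2 := by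
      rw [norm_smul]
      simp [map_mul, habs, Complex.norm_real,
        abs_of_pos hR, mul_pow]
    have h2 : (RCLike.re (inner ℂ (((R : ℂ) * e) • w) (C w) : ℂ)) = R * t := by
      simp only [RCLike.re_to_complex]
      rw [inner_smul_left, ← hs, map_mul, Complex.conj_ofReal, mul_assoc,
        Complex.re_ofReal_mul, ht]
      congr 1
      have h3 := Complex.conj_re (e * starRingEnd ℂ s)
      simp only [map_mul, Complex.conj_conj, RCLike.re_to_complex] at h3
      rw [← h3]
    rw [h1, h2]
    ring
  -- bound ‖Cw‖ ≤ R‖w‖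
  have hCw : ‖C w‖ ≤ R * ‖w‖ := by
    calc ‖C w‖ ≤ ‖C‖ * ‖w‖ := C.le_opNorm w
    _ ≤ R * ‖w‖ := mul_le_mul_of_nonneg_right hA (norm_nonneg w)
  have hCw2 : ‖C w‖ ^ 2 ≤ R ^ 2 * ‖w‖ ^ 2 := by
    have h0 : (0:ℝ) ≤ ‖C w‖ := norm_nonneg _
    nlinarith [norm_nonneg w]
  rw [him, hnv]
  rw [div_le_div_iff₀ (by positivity) hπ]
  nlinarith [hπ, hR]
end

section
/- Let A be a bounded linear operator on a complex Hilbert space H, let ω ∈ ℂ, R > 0, θ ∈ ℝ, and set σ₀ = ω + (1/R) e^{−iθ} and τ = −i e^{−iθ} (so that σ₀ − ω = iτ/R). Assume that A − ωI is invertible with ‖(A − ωI)⁻¹‖ ≤ R and that σ₀I − A is invertible. Then for every v ∈ H, Re⟨μ(σ₀, τ; A) v, v⟩ ≥ −(R/(2π)) ‖v‖²; in other words, λ_min(μ(σ₀, τ; A)) ≥ −R/(2π). -/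
variable {H : Type*} [NormedAddCommGroup H] [InnerProductSpace ℂ H] [CompleteSpace H]

set_option maxHeartbeats 1000000 in
/-- **Lemma 6.** If `A − ωI` is invertible with `‖(A − ωI)⁻¹‖ ≤ R`,
`σ₀ = ω + (1/R) e^{−iθ}` lies on the circle of center `ω` and radius `1/R`,
`τ = −i e^{−iθ}` (so `σ₀ − ω = iτ/R`), and `σ₀ I − A` is invertible, then
`λ_min(μ(σ₀, τ; A)) ≥ −R/(2π)`. -/
theorem dlpKernel_lambda_min_ge_of_inverse_norm_le
    (A B : H →L[ℂ] H) (ω : ℂ) (R : ℝ) (hR : 0 < R) (θ : ℝ)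
    (σ₀ τ : ℂ) (hσ₀ : σ₀ = ω + (1 / R : ℝ) * Complex.exp (-θ * Complex.I))
    (hτ : τ = -Complex.I * Complex.exp (-θ * Complex.I))
    (hAB : (A - ω • (1 : H →L[ℂ] H)) * B = 1) (hBA : B * (A - ω • (1 : H →L[ℂ] H)) = 1)
    (hB : ‖B‖ ≤ R)
    (hinv : IsUnit (σ₀ • (1 : H →L[ℂ] H) - A)) :
    ∀ v : H, -(R / (2 * Real.pi)) * ‖v‖ ^ 2 ≤ (inner ℂ v (dlpKernel A σ₀ τ v) : ℂ).re := by
  intro v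
  have hπ : (0:ℝ) < Real.pi := Real.pi_pos
  set T : H →L[ℂ] H := σ₀ • (1 : H →L[ℂ] H) - A with hT
  -- the conjugate operator is the star of T
  have hTstar : (starRingEnd ℂ σ₀) • (1 : H →L[ℂ] H) - ContinuousLinearMap.adjoint A
      = star T := by
    simp [hT, star_sub, star_smul, ← ContinuousLinearMap.star_eq_adjoint]
  -- abbreviation
  set u : H := Ring.inverse T v with hu
  have hTu : T u = v := by
    have h1 : T * Ring.inverse T = 1 := Ring.mul_inverse_cancel _ hinv
    calc T u = (T * Ring.inverse T) v := rfl
    _ = v := by rw [h1]; rfl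
  -- the inner product value
  set z₁ : ℂ := inner ℂ v u with hz₁
  have hstarinv : Ring.inverse ((starRingEnd ℂ σ₀) • (1 : H →L[ℂ] H)
      - ContinuousLinearMap.adjoint A) v = ContinuousLinearMap.adjoint (Ring.inverse T) v := by
    rw [hTstar, Ring.inverse_star, ContinuousLinearMap.star_eq_adjoint]
  have hip : (inner ℂ v (dlpKernel A σ₀ τ v) : ℂ)
      = (2 * (Real.pi : ℂ) * Complex.I)⁻¹ * (τ * z₁ - (starRingEnd ℂ) (τ * z₁)) := by
    rw [dlpKernel]
    simp only [ContinuousLinearMap.smul_apply, ContinuousLinearMap.sub_apply, hstarinv,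
      inner_smul_right, inner_sub_right, ContinuousLinearMap.adjoint_inner_right]
    rw [← inner_conj_symm u v]
    simp only [← hT, ← hu, ← hz₁, map_mul]
  set w0 : ℂ := τ * z₁ with hw0
  have hval : (inner ℂ v (dlpKernel A σ₀ τ v) : ℂ).re = w0.im / Real.pi := by
    rw [hip]
    rw [Complex.sub_conj w0]
    have hπ' : (Real.pi : ℂ) ≠ 0 := Complex.ofReal_ne_zero.mpr (ne_of_gt hπ)
    rw [show (2 * (Real.pi : ℂ) * Complex.I)⁻¹ * (((2 * w0.im : ℝ) : ℂ) * Complex.I)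
        = (w0.im : ℂ) / (Real.pi : ℂ) by
      push_cast
      field_simp]
    rw [← Complex.ofReal_div]
    exact Complex.ofReal_re _
  rw [hval]
  rw [show -(R / (2 * Real.pi)) * ‖v‖ ^ 2 = (-(R/2) * ‖v‖ ^ 2) / Real.pi by field_simp]
  rw [div_le_div_iff_of_pos_right hπ]
  -- Main estimate.  Write σ₀ = ω + iτ/R.
  have hτ1 : τ.re ^ 2 + τ.im ^ 2 = 1 := by
    have : Complex.normSq τ = 1 := by
      rw [hτ]
      simp [Complex.normSq_eq_norm_sq, Complex.norm_exp]
    simpa [Complex.normSq_apply, sq] using this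
  have hστ : σ₀ = ω + Complex.I * τ / R := by
    rw [hσ₀, hτ]
    have h2 : Complex.I * (-Complex.I * Complex.exp (-(θ:ℂ) * Complex.I))
        = Complex.exp (-(θ:ℂ) * Complex.I) := by
      linear_combination (-Complex.exp (-(θ:ℂ) * Complex.I)) * Complex.I_mul_I
    rw [h2]
    push_cast
    ring
  set wv : H := A u - ω • u with hwv
  have hv : v = (Complex.I * τ / (R:ℂ)) • u - wv := by
    rw [← hTu]
    simp only [hT, hστ, hwv, ContinuousLinearMap.sub_apply, ContinuousLinearMap.smul_apply,
      ContinuousLinearMap.one_apply]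
    module
  have hBu : ‖u‖ ≤ R * ‖wv‖ := by
    have hBwv : B wv = u := by
      have : wv = (A - ω • (1 : H →L[ℂ] H)) u := by
        simp [hwv, ContinuousLinearMap.sub_apply, ContinuousLinearMap.smul_apply,
          ContinuousLinearMap.one_apply]
      rw [this, ← ContinuousLinearMap.mul_apply, hBA, ContinuousLinearMap.one_apply]
    calc ‖u‖ = ‖B wv‖ := by rw [hBwv]
    _ ≤ ‖B‖ * ‖wv‖ := B.le_opNorm wv
    _ ≤ R * ‖wv‖ := mul_le_mul_of_nonneg_right hB (norm_nonneg _)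
  set p : ℂ := inner ℂ u wv with hp
  set c : ℂ := Complex.I * τ / (R:ℂ) with hc
  -- components of c
  have hcre : c.re = -τ.im / R := by
    simp [hc, Complex.div_re, Complex.normSq_ofReal, Complex.mul_re]
    field_simp
  have hcim : c.im = τ.re / R := by
    simp [hc, Complex.div_im, Complex.normSq_ofReal, Complex.mul_im]
    field_simp
  -- z₁ in components
  have hz₁' : z₁ = (starRingEnd ℂ) c * ((‖u‖:ℂ))^2 - (starRingEnd ℂ) p := by
    rw [hz₁, hv]
    rw [inner_sub_left, inner_smul_left, inner_self_eq_norm_sq_to_K,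
      ← inner_conj_symm wv u, ← hp]
    norm_cast
  -- ‖v‖² in components
  have hnv : ‖v‖ ^ 2 = ‖u‖^2 / R^2 - 2 * (c.re * p.re + c.im * p.im) + ‖wv‖^2 := by
    rw [hv, @norm_sub_sq ℂ, inner_smul_left, ← hp]
    have habs : ‖c • u‖^2 = ‖u‖^2 / R^2 := by
      rw [norm_smul, mul_pow]
      have hcn : ‖c‖^2 = 1 / R^2 := by
        rw [Complex.sq_norm, Complex.normSq_apply, hcre, hcim]
        field_simp
        nlinarith [hτ1]
      rw [hcn]; ring
    rw [habs]
    simp only [RCLike.re_to_complex]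
    rw [show ((starRingEnd ℂ) c * p).re = c.re * p.re + c.im * p.im by
      simp [Complex.mul_re]]
  -- imaginary part of w0
  have hw0im : w0.im = -(‖u‖^2)/R + (τ.re * p.im - τ.im * p.re) := by
    have hz : z₁ = (starRingEnd ℂ) c * ((‖u‖^2 : ℝ) : ℂ) - (starRingEnd ℂ) p := by
      rw [hz₁']; push_cast; ring
    rw [hw0, hz]
    simp only [Complex.mul_im, Complex.mul_re, Complex.sub_re, Complex.sub_im,
      Complex.conj_re, Complex.conj_im, Complex.ofReal_re, Complex.ofReal_im]
    rw [hcre, hcim]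
    field_simp
    nlinarith [hτ1]
  -- final real computation
  rw [hw0im, hnv, hcre, hcim]
  have hkey : ‖u‖^2 ≤ R^2 * ‖wv‖^2 := by
    nlinarith [hBu, norm_nonneg u, norm_nonneg wv]
  have e1 : -(R/2) * (‖u‖^2/R^2 - 2*(-τ.im/R * p.re + τ.re/R * p.im) + ‖wv‖^2)
      = (-(‖u‖^2)/R + (τ.re * p.im - τ.im * p.re))
        - (R^2 * ‖wv‖^2 - ‖u‖^2)/(2*R) := by
    field_simp
    ring
  have hpos : (0:ℝ) ≤ (R^2 * ‖wv‖^2 - ‖u‖^2)/(2*R) :=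
    div_nonneg (by linarith) (by linarith)
  linarith [e1, hpos]
end

section
/- Let A be a bounded linear operator on a complex Hilbert space H, let ω ∈ ℂ, R > 0, θ ∈ ℝ, and set σ₀ = ω + (1/R) e^{−iθ} and τ = −i e^{−iθ} (so that σ₀ − ω = iτ/R). Assume that A − ωI is invertible, that its inverse has numerical radius at most R, i.e. |⟨(A − ωI)⁻¹ u, u⟩| ≤ R for every unit vector u ∈ H, and that σ₀I − A is invertible. Then for every v ∈ H, Re⟨μ(σ₀, τ; A) v, v⟩ ≥ −(R/π) ‖v‖²; in other words, λ_min(μ(σ₀, τ; A)) ≥ −R/π. -/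
variable {H : Type*} [NormedAddCommGroup H] [InnerProductSpace ℂ H] [CompleteSpace H]

/-- **Lemma 7.** If `A − ωI` is invertible and its inverse has numerical radius at most `R`,
`σ₀ = ω + (1/R) e^{−iθ}` lies on the circle of center `ω` and radius `1/R`,
`τ = −i e^{−iθ}` (so `σ₀ − ω = iτ/R`), and `σ₀ I − A` is invertible, then
`λ_min(μ(σ₀, τ; A)) ≥ −R/π`. -/
theorem dlpKernel_lambda_min_ge_of_inverse_numericalRadius_le
    (A B : H →L[ℂ] H) (ω : ℂ) (R : ℝ) (hR : 0 < R) (θ : ℝ)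
    (σ₀ τ : ℂ) (hσ₀ : σ₀ = ω + (1 / R : ℝ) * Complex.exp (-θ * Complex.I))
    (hτ : τ = -Complex.I * Complex.exp (-θ * Complex.I))
    (hAB : (A - ω • (1 : H →L[ℂ] H)) * B = 1) (hBA : B * (A - ω • (1 : H →L[ℂ] H)) = 1)
    (hB : ∀ u : H, ‖u‖ = 1 → ‖(inner ℂ u (B u) : ℂ)‖ ≤ R)
    (hinv : IsUnit (σ₀ • (1 : H →L[ℂ] H) - A)) :
    ∀ v : H, -(R / Real.pi) * ‖v‖ ^ 2 ≤ (inner ℂ v (dlpKernel A σ₀ τ v) : ℂ).re := by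
  intro v
  have hπ : (0:ℝ) < Real.pi := Real.pi_pos
  have hRc : (R:ℂ) ≠ 0 := by exact_mod_cast hR.ne'
  -- numerical radius bound for all vectors
  have hBw : ∀ x : H, ‖(inner ℂ x (B x) : ℂ)‖ ≤ R * ‖x‖^2 := by
    intro x
    rcases eq_or_ne x 0 with h | h
    · simp [h]
    · have hx0 : (0:ℝ) < ‖x‖ := norm_pos_iff.mpr h
      set c : ℂ := ((‖x‖ : ℝ) : ℂ)⁻¹ with hc
      have hcx : ‖c • x‖ = 1 := by
        rw [norm_smul, hc]; simp [hx0.ne']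
      have h2 := hB _ hcx
      rw [map_smul, inner_smul_left, inner_smul_right] at h2
      have hcc : (starRingEnd ℂ) c = c := by simp [hc, ← Complex.ofReal_inv]
      rw [hcc, norm_mul, norm_mul, hc] at h2
      simp only [norm_inv, Complex.norm_real, Real.norm_eq_abs, abs_of_pos hx0] at h2
      calc ‖(inner ℂ x (B x) : ℂ)‖ = ‖x‖^2 * (‖x‖⁻¹ * (‖x‖⁻¹ * ‖(inner ℂ x (B x) : ℂ)‖)) := by
            field_simp
        _ ≤ ‖x‖^2 * R := mul_le_mul_of_nonneg_left h2 (sq_nonneg _)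
        _ = R * ‖x‖^2 := by ring
  set C : H →L[ℂ] H := σ₀ • 1 - A with hC
  set Ci : H →L[ℂ] H := Ring.inverse C with hCi
  have hstar : (starRingEnd ℂ σ₀) • (1 : H →L[ℂ] H) - ContinuousLinearMap.adjoint A
      = star C := by
    rw [hC, star_sub, star_smul, star_one, ContinuousLinearMap.star_eq_adjoint,
      starRingEnd_apply]
  set u : H := Ci v with hu
  have hvCu : C u = v := by
    have := congrArg (fun T : H →L[ℂ] H => T v) (Ring.mul_inverse_cancel C hinv)
    simpa [ContinuousLinearMap.mul_apply, hu, hCi] using this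
  set w : H := A u - ω • u with hw
  have huBw : B w = u := by
    have := congrArg (fun T : H →L[ℂ] H => T u) hBA
    simpa [ContinuousLinearMap.mul_apply, ContinuousLinearMap.sub_apply,
      ContinuousLinearMap.smul_apply, ContinuousLinearMap.one_apply, hw] using this
  set s : ℂ := ((1/R : ℝ):ℂ) * Complex.exp (-θ * Complex.I) with hs
  have hσs : σ₀ - ω = s := by rw [hσ₀]; ring
  have hv : v = s • u - w := by
    rw [← hvCu]
    simp only [hC, ContinuousLinearMap.sub_apply, ContinuousLinearMap.smul_apply,
      ContinuousLinearMap.one_apply, hw, ← hσs]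
    rw [sub_smul]
    abel
  set q : ℂ := τ * (inner ℂ w u : ℂ) with hq
  have hτn : ‖τ‖ = 1 := by rw [hτ]; simp [Complex.norm_exp]
  have hqb : ‖q‖ ≤ R * ‖w‖^2 := by
    rw [hq, norm_mul, hτn, one_mul, ← huBw]
    exact hBw w
  have hqim : -(R * ‖w‖^2) ≤ q.im := by
    have h1 : |q.im| ≤ ‖q‖ := Complex.abs_im_le_norm q
    have h2 : -q.im ≤ |q.im| := neg_le_abs _
    linarith
  set z : ℂ := τ * (inner ℂ v u : ℂ) with hz
  have hτs : τ * (starRingEnd ℂ) s = -Complex.I / R := by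
    rw [hτ, hs, map_mul, ← Complex.exp_conj]
    have h1 : (starRingEnd ℂ) (-↑θ * Complex.I) = ↑θ * Complex.I := by simp
    rw [h1, Complex.conj_ofReal]
    have h2 : Complex.exp (-θ * Complex.I) * Complex.exp (θ * Complex.I) = 1 := by
      rw [← Complex.exp_add]; ring_nf; exact Complex.exp_zero
    push_cast
    linear_combination (-Complex.I/(R:ℂ)) * h2
  have hsIτ : s = Complex.I / R * τ := by
    rw [hs, hτ]
    have hRc' := hRc
    push_cast
    field_simp
    ring_nf
    simp [Complex.I_sq]
  have hzval : z = -Complex.I / R * ((‖u‖^2 : ℝ) : ℂ) - q := by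
    rw [hz, hv, inner_sub_left, inner_smul_left, inner_self_eq_norm_sq_to_K]
    rw [mul_sub, ← mul_assoc, hτs, hq]
    push_cast
    ring_nf
    rfl
  have him : z.im = -(‖u‖^2/R) - q.im := by
    have haux : -Complex.I / ↑R * ((‖u‖^2:ℝ):ℂ)
        = ((-(‖u‖^2/R) : ℝ) : ℂ) * Complex.I := by
      push_cast
      ring
    rw [hzval, haux, Complex.sub_im, Complex.mul_I_im, Complex.ofReal_re]
  have hsuw : (inner ℂ (s • u) w : ℂ) = (starRingEnd ℂ) (Complex.I / R * q) := by
    rw [inner_smul_left, hsIτ, hq]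
    simp only [map_mul, inner_conj_symm]
    ring
  have hre : (inner ℂ (s • u) w : ℂ).re = -(q.im / R) := by
    rw [hsuw, Complex.conj_re]
    simp [Complex.mul_re, Complex.div_re, Complex.div_im]
    ring
  have hsn : ‖s‖ = 1/R := by
    rw [hs]; simp [Complex.norm_exp, abs_of_pos hR]
  have hnv : ‖v‖^2 = ‖u‖^2/R^2 + 2/R*q.im + ‖w‖^2 := by
    rw [hv, @norm_sub_sq ℂ, norm_smul, hsn]
    simp only [RCLike.re_to_complex]
    rw [hre]
    field_simp
    ring
  have hkey : -(R * ‖v‖^2) ≤ z.im := by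
    rw [him, hnv]
    have expand : R * (‖u‖^2/R^2 + 2/R*q.im + ‖w‖^2)
        = ‖u‖^2/R + 2*q.im + R*‖w‖^2 := by
      field_simp
    linarith [expand, hqim]
  have hdlp : (inner ℂ v (dlpKernel A σ₀ τ v) : ℂ) = ((z.im / Real.pi : ℝ) : ℂ) := by
    show (inner ℂ v ((((2 * (Real.pi : ℂ) * Complex.I)⁻¹ •
      (τ • Ring.inverse (σ₀ • (1 : H →L[ℂ] H) - A) -
        (starRingEnd ℂ τ) • Ring.inverse
          ((starRingEnd ℂ σ₀) • (1 : H →L[ℂ] H) - ContinuousLinearMap.adjoint A))) v)) : ℂ) = _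
    rw [hstar, Ring.inverse_star, ← hCi]
    simp only [ContinuousLinearMap.smul_apply, ContinuousLinearMap.sub_apply,
      inner_smul_right, inner_sub_right, ContinuousLinearMap.star_eq_adjoint,
      ContinuousLinearMap.adjoint_inner_right]
    have hπc : ((Real.pi : ℝ) : ℂ) ≠ 0 := by exact_mod_cast hπ.ne'
    have hIne : Complex.I ≠ 0 := Complex.I_ne_zero
    rw [← hu]
    have h1 : (inner ℂ u v : ℂ) = (starRingEnd ℂ) (inner ℂ v u) := (inner_conj_symm u v).symm
    rw [h1, ← map_mul, ← hz, Complex.sub_conj]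
    push_cast
    field_simp
  rw [hdlp, Complex.ofReal_re]
  have hgoal : -(R / Real.pi) * ‖v‖ ^ 2 = -(R * ‖v‖^2) / Real.pi := by ring
  rw [hgoal]
  gcongr
end

section
/- Let 0 < r < R and let σ₀ ∈ ℂ with |σ₀| = R. Then (1/π) ∫₀^{2π} | Im( i r e^{iθ} / (r e^{iθ} − σ₀) ) | dθ = (4/π) · arcsin(r/R). -/
open Real intervalIntegral

namespace DLP12

variable {r R : ℝ}

/-- the kernel as a real function -/
noncomputable def g (r R t : ℝ) : ℝ :=
  (r^2 - r*R*Real.cos t) / (r^2 + R^2 - 2*r*R*Real.cos t)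

noncomputable def F (r R t : ℝ) : ℝ :=
  Real.arctan (r * Real.sin t / (r * Real.cos t - R))

lemma denom_pos (hr : 0 < r) (hrR : r < R) (t : ℝ) :
    0 < r^2 + R^2 - 2*r*R*Real.cos t := by
  have h1 : 0 ≤ 2*r*R*(1 - Real.cos t) :=
    mul_nonneg (by nlinarith) (by linarith [Real.cos_le_one t])
  nlinarith [sq_nonneg (R - r), h1]

lemma v_neg (hr : 0 < r) (hrR : r < R) (t : ℝ) : r * Real.cos t - R < 0 := by
  nlinarith [Real.cos_le_one t]

lemma hasDerivAt_F (hr : 0 < r) (hrR : r < R) (t : ℝ) :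
    HasDerivAt (F r R) (g r R t) t := by
  have hv : r * Real.cos t - R ≠ 0 := (v_neg hr hrR t).ne
  have hu : HasDerivAt (fun t => r * Real.sin t) (r * Real.cos t) t :=
    (Real.hasDerivAt_sin t).const_mul r
  have hw : HasDerivAt (fun t => r * Real.cos t - R) (r * (-Real.sin t)) t :=
    ((Real.hasDerivAt_cos t).const_mul r).sub_const R
  have hq := hu.div hw hv
  have ha := (Real.hasDerivAt_arctan (r * Real.sin t / (r * Real.cos t - R))).comp t hq
  convert ha using 1
  case e'_4 => rfl
  case e'_5 => rfl
  case e'_8 => rfl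
  have hs := Real.sin_sq_add_cos_sq t
  have hN : r^2 + R^2 - 2*r*R*Real.cos t ≠ 0 := (denom_pos hr hrR t).ne'
  have key : 1 + (r*Real.sin t/(r*Real.cos t - R))^2
      = (r^2 + R^2 - 2*r*R*Real.cos t)/(r*Real.cos t - R)^2 := by
    field_simp
    linear_combination r^2 * hs
  have hE : r * Real.cos t * (r*Real.cos t - R) - r * Real.sin t * (r * -Real.sin t)
      = r^2 - r*R*Real.cos t := by linear_combination r^2 * hs
  rw [key, hE, one_div_div, g]
  field_simp

lemma g_cont (hr : 0 < r) (hrR : r < R) : Continuous (g r R) := by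
  apply Continuous.div
  · continuity
  · continuity
  · exact fun t => (denom_pos hr hrR t).ne'

lemma integral_g (hr : 0 < r) (hrR : r < R) (a b : ℝ) :
    ∫ t in a..b, g r R t = F r R b - F r R a :=
  intervalIntegral.integral_eq_sub_of_hasDerivAt (fun t _ => hasDerivAt_F hr hrR t)
    ((g_cont hr hrR).intervalIntegrable a b)

lemma im_eq (hr : 0 < r) (hrR : r < R) (t : ℝ) :
    (Complex.I * (r * Complex.exp (t * Complex.I)) /
      (r * Complex.exp (t * Complex.I) - (R:ℂ))).im = g r R t := by
  have h1 : (Complex.exp (t * Complex.I)).re = Real.cos t := Complex.exp_ofReal_mul_I_re t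
  have h2 : (Complex.exp (t * Complex.I)).im = Real.sin t := Complex.exp_ofReal_mul_I_im t
  rw [Complex.div_im]
  have hs := Real.sin_sq_add_cos_sq t
  have hN : r^2 + R^2 - 2*r*R*Real.cos t ≠ 0 := (denom_pos hr hrR t).ne'
  simp only [Complex.normSq_apply, Complex.mul_im, Complex.mul_re, Complex.sub_re,
    Complex.sub_im, Complex.I_re, Complex.I_im, Complex.ofReal_re, Complex.ofReal_im,
    h1, h2, g, mul_zero, zero_mul, mul_one, one_mul, sub_zero, zero_add, add_zero, zero_sub]
  have hDpos : 0 < (r * Real.cos t - R) * (r * Real.cos t - R) + r * Real.sin t * (r * Real.sin t) := by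
    nlinarith [mul_self_nonneg (r * Real.sin t),
      mul_pos_of_neg_of_neg (v_neg hr hrR t) (v_neg hr hrR t)]
  rw [div_sub_div_same, div_eq_div_iff hDpos.ne' hN]
  linear_combination (r^2*R^2 - r^3*R*Real.cos t) * hs

/-- sign facts -/
lemma g_nonpos (hr : 0 < r) (hrR : r < R) {t : ℝ} (h : r / R ≤ Real.cos t) :
    g r R t ≤ 0 := by
  have hR : 0 < R := hr.trans hrR
  apply div_nonpos_of_nonpos_of_nonneg
  · have : r ≤ R * Real.cos t := by
      rw [div_le_iff₀ hR] at h; linarith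
    nlinarith
  · exact (denom_pos hr hrR t).le

lemma g_nonneg (hr : 0 < r) (hrR : r < R) {t : ℝ} (h : Real.cos t ≤ r / R) :
    0 ≤ g r R t := by
  have hR : 0 < R := hr.trans hrR
  apply div_nonneg
  · have : R * Real.cos t ≤ r := by
      rw [le_div_iff₀ hR] at h; linarith
    nlinarith
  · exact (denom_pos hr hrR t).le

lemma F_zero (hr : 0 < r) (hrR : r < R) : F r R 0 = 0 := by
  simp [F]

lemma F_two_pi (hr : 0 < r) (hrR : r < R) : F r R (2*Real.pi) = 0 := by
  simp [F, Real.sin_two_pi]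

lemma F_t0 (hr : 0 < r) (hrR : r < R) :
    F r R (Real.arccos (r/R)) = -Real.arcsin (r/R) := by
  have hR : 0 < R := hr.trans hrR
  have hx0 : 0 < r / R := div_pos hr hR
  have hx1 : r / R < 1 := (div_lt_one hR).2 hrR
  have hc : Real.cos (Real.arccos (r/R)) = r / R := Real.cos_arccos (by linarith) hx1.le
  have hs : Real.sin (Real.arccos (r/R)) = Real.sqrt (1 - (r/R)^2) := by
    rw [Real.sin_arccos]
  have hsq_pos : 0 < 1 - (r/R)^2 := by nlinarith
  have hsqrt_pos : 0 < Real.sqrt (1 - (r/R)^2) := Real.sqrt_pos.2 hsq_pos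
  have key : r * Real.sin (Real.arccos (r/R)) / (r * Real.cos (Real.arccos (r/R)) - R)
      = -((r/R) / Real.sqrt (1 - (r/R)^2)) := by
    rw [hc, hs]
    set s := Real.sqrt (1 - (r/R)^2) with hsdef
    have hs2 : s^2 = 1 - (r/R)^2 := Real.sq_sqrt hsq_pos.le
    have hsne : s ≠ 0 := hsqrt_pos.ne'
    rw [show r * (r/R) - R = -(R * s^2) by rw [hs2]; field_simp; ring]
    rw [div_neg, neg_inj]
    rw [pow_two, ← mul_assoc, div_mul_eq_div_div]
    congr 1
    rw [mul_comm r s, mul_comm R s, mul_div_mul_left _ _ hsne]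
  rw [F, key, Real.arctan_neg, ← Real.arcsin_eq_arctan ⟨by linarith, hx1⟩]

lemma F_refl (hr : 0 < r) (hrR : r < R) (t : ℝ) : F r R (2*Real.pi - t) = - F r R t := by
  simp [F, Real.sin_two_pi, Real.cos_two_pi, Real.sin_sub, Real.cos_sub, Real.arctan_neg,
    neg_div, mul_neg]

lemma abs_integral (hr : 0 < r) (hrR : r < R) :
    ∫ t in (0:ℝ)..(2*Real.pi), |g r R t| = 4 * Real.arcsin (r / R) := by
  have hR : 0 < R := hr.trans hrR
  set t₀ := Real.arccos (r/R) with ht₀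
  have hx1 : r / R < 1 := (div_lt_one hR).2 hrR
  have hx0 : 0 < r / R := div_pos hr hR
  have ht₀pos : 0 < t₀ := Real.arccos_pos.2 hx1
  have ht₀pi : t₀ < Real.pi / 2 := Real.arccos_lt_pi_div_two.2 hx0
  have hpi := Real.pi_pos
  have hc : Real.cos t₀ = r / R := Real.cos_arccos (by linarith) hx1.le
  have habs : Continuous (fun t => |g r R t|) := (g_cont hr hrR).abs
  -- split
  have hsplit : ∫ t in (0:ℝ)..(2*Real.pi), |g r R t|
      = (∫ t in (0:ℝ)..t₀, |g r R t|) + (∫ t in t₀..(2*Real.pi - t₀), |g r R t|)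
        + (∫ t in (2*Real.pi - t₀)..(2*Real.pi), |g r R t|) := by
    rw [intervalIntegral.integral_add_adjacent_intervals (habs.intervalIntegrable _ _)
      (habs.intervalIntegrable _ _),
      intervalIntegral.integral_add_adjacent_intervals (habs.intervalIntegrable _ _)
      (habs.intervalIntegrable _ _)]
  have e1 : ∫ t in (0:ℝ)..t₀, |g r R t| = -∫ t in (0:ℝ)..t₀, g r R t := by
    rw [← intervalIntegral.integral_neg]
    apply intervalIntegral.integral_congr
    intro t ht
    rw [Set.uIcc_of_le ht₀pos.le] at ht
    have : r / R ≤ Real.cos t := by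
      rw [← hc]
      exact Real.cos_le_cos_of_nonneg_of_le_pi ht.1 (by linarith) ht.2
    exact abs_of_nonpos (g_nonpos hr hrR this)
  have e2 : ∫ t in t₀..(2*Real.pi - t₀), |g r R t| = ∫ t in t₀..(2*Real.pi - t₀), g r R t := by
    apply intervalIntegral.integral_congr
    intro t ht
    rw [Set.uIcc_of_le (by linarith)] at ht
    have hcos : Real.cos t ≤ r / R := by
      rw [← hc]
      rcases le_total t Real.pi with h | h
      · exact Real.cos_le_cos_of_nonneg_of_le_pi (by linarith) h ht.1
      · rw [show t = 2*Real.pi - (2*Real.pi - t) by ring, Real.cos_two_pi_sub]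
        exact Real.cos_le_cos_of_nonneg_of_le_pi (by linarith) (by linarith)
          (by linarith [ht.2])
    exact abs_of_nonneg (g_nonneg hr hrR hcos)
  have e3 : ∫ t in (2*Real.pi - t₀)..(2*Real.pi), |g r R t|
      = -∫ t in (2*Real.pi - t₀)..(2*Real.pi), g r R t := by
    rw [← intervalIntegral.integral_neg]
    apply intervalIntegral.integral_congr
    intro t ht
    rw [Set.uIcc_of_le (by linarith)] at ht
    have : r / R ≤ Real.cos t := by
      rw [← hc, show t = 2*Real.pi - (2*Real.pi - t) by ring, Real.cos_two_pi_sub]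
      exact Real.cos_le_cos_of_nonneg_of_le_pi (by linarith [ht.2]) (by linarith)
        (by linarith [ht.1])
    exact abs_of_nonpos (g_nonpos hr hrR this)
  rw [hsplit, e1, e2, e3, integral_g hr hrR, integral_g hr hrR, integral_g hr hrR,
    F_zero hr hrR, F_two_pi hr hrR, F_refl hr hrR, F_t0 hr hrR]
  ring

end DLP12

/-- For `0 < r < R` and `σ₀` on the circle `|σ₀| = R`, the total variation
of the argument kernel of the circle of radius `r` seen from `σ₀` is
`(1/π) ∫₀^{2π} |Im(i r e^{iθ}/(r e^{iθ} − σ₀))| dθ = (4/π) arcsin(r/R)`. -/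
theorem integral_abs_dlp_kernel_inner_circle
    (r R : ℝ) (hr : 0 < r) (hrR : r < R) (σ₀ : ℂ) (hσ₀ : ‖σ₀‖ = R) :
    (1 / Real.pi) * ∫ θ in (0:ℝ)..(2 * Real.pi),
        |(Complex.I * (r * Complex.exp (θ * Complex.I)) /
            (r * Complex.exp (θ * Complex.I) - σ₀)).im| =
      (4 / Real.pi) * Real.arcsin (r / R) := by
  have hR : 0 < R := hr.trans hrR
  set φ := σ₀.arg with hφ
  have hσ : σ₀ = (R:ℂ) * Complex.exp (φ * Complex.I) := by
    rw [← hσ₀]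
    exact (Complex.norm_mul_exp_arg_mul_I σ₀).symm
  have key : ∀ θ : ℝ, Complex.I * (r * Complex.exp (θ * Complex.I)) /
      (r * Complex.exp (θ * Complex.I) - σ₀)
      = Complex.I * (r * Complex.exp ((θ - φ) * Complex.I)) /
        (r * Complex.exp ((θ - φ) * Complex.I) - (R:ℂ)) := by
    intro θ
    have hexp : Complex.exp (θ * Complex.I)
        = Complex.exp (φ * Complex.I) * Complex.exp ((θ - φ) * Complex.I) := by
      rw [← Complex.exp_add]; ring_nf
    rw [hσ, hexp]
    rw [show Complex.I * (↑r * (Complex.exp (↑φ * Complex.I) * Complex.exp ((↑θ - ↑φ) * Complex.I)))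
        = Complex.exp (↑φ * Complex.I) * (Complex.I * (↑r * Complex.exp ((↑θ - ↑φ) * Complex.I))) by ring,
      show ↑r * (Complex.exp (↑φ * Complex.I) * Complex.exp ((↑θ - ↑φ) * Complex.I)) - ↑R * Complex.exp (↑φ * Complex.I)
        = Complex.exp (↑φ * Complex.I) * (↑r * Complex.exp ((↑θ - ↑φ) * Complex.I) - ↑R) by ring]
    exact mul_div_mul_left _ _ (Complex.exp_ne_zero _)
  have keyim : ∀ θ : ℝ, |(Complex.I * (r * Complex.exp (θ * Complex.I)) /
      (r * Complex.exp (θ * Complex.I) - σ₀)).im| = |DLP12.g r R (θ - φ)| := by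
    intro θ
    rw [key θ]
    congr 1
    have := DLP12.im_eq hr hrR (θ - φ)
    rw [← this]
    norm_cast
  have hper : Function.Periodic (fun t => |DLP12.g r R t|) (2 * Real.pi) := by
    intro t
    simp [DLP12.g, Real.cos_add, Real.cos_two_pi, Real.sin_two_pi]
  calc (1 / Real.pi) * ∫ θ in (0:ℝ)..(2 * Real.pi),
        |(Complex.I * (r * Complex.exp (θ * Complex.I)) /
            (r * Complex.exp (θ * Complex.I) - σ₀)).im|
      = (1 / Real.pi) * ∫ θ in (0:ℝ)..(2 * Real.pi), |DLP12.g r R (θ - φ)| := by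
        congr 1
        apply intervalIntegral.integral_congr
        intro θ _
        exact keyim θ
    _ = (1 / Real.pi) * ∫ t in (0-φ)..(2 * Real.pi - φ), |DLP12.g r R t| := by
        rw [intervalIntegral.integral_comp_sub_right (fun t => |DLP12.g r R t|) φ]
    _ = (1 / Real.pi) * ∫ t in (0:ℝ)..(2 * Real.pi), |DLP12.g r R t| := by
        congr 1
        rw [show (0:ℝ)-φ = -φ by ring, show 2*Real.pi - φ = -φ + 2*Real.pi by ring,
          hper.intervalIntegral_add_eq (-φ) 0, zero_add]
    _ = (4 / Real.pi) * Real.arcsin (r / R) := by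
        rw [DLP12.abs_integral hr hrR]
        ring
end
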